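/- For the singlet state (η = 1 in the Werner family) the maximum over θ of |κ₃(S)| = |−8(cosθ+sinθ)(−4 + 2(cosθ+sinθ)²)| equals 64√6/9, which exceeds 8 (the bound for any classical random variable with values in [−2,2]). -/
import Mathlib

/-- For the singlet (`η = 1`), the maximum over `θ` of
`|−8(cosθ+sinθ)(−4 + 2(cosθ+sinθ)²)|` equals `64√6/9`, which exceeds `8`. -/
theorem stmt_18 :
    IsGreatest (Set.range fun θ : ℝ =>
        |(-8) * (Real.cos θ + Real.sin θ) * (-4 + 2 * (Real.cos θ + Real.sin θ) ^ 2)|)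
      (64 * Real.sqrt 6 / 9) ∧
    64 * Real.sqrt 6 / 9 > 8 := by
  have h6 : (Real.sqrt 6) ^ 2 = 6 := Real.sq_sqrt (by norm_num)
  have h6pos : (0:ℝ) < Real.sqrt 6 := Real.sqrt_pos.mpr (by norm_num)
  have h6lb : Real.sqrt 6 > 2.4 := by nlinarith [h6, h6pos]
  refine ⟨⟨?_, ?_⟩, by nlinarith⟩
  · -- membership: choose θ = arcsin (√3/3) - π/4
    have h3 : (Real.sqrt 3) ^ 2 = 3 := Real.sq_sqrt (by norm_num)
    have h3pos : (0:ℝ) < Real.sqrt 3 := Real.sqrt_pos.mpr (by norm_num)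
    refine ⟨Real.arcsin (Real.sqrt 3 / 3) - Real.pi / 4, ?_⟩
    set θ := Real.arcsin (Real.sqrt 3 / 3) - Real.pi / 4 with hθ
    have hs : Real.sin (θ + Real.pi / 4) = Real.sqrt 3 / 3 := by
      rw [hθ, sub_add_cancel]
      exact Real.sin_arcsin (by nlinarith) (by nlinarith)
    have h2 : (Real.sqrt 2) ^ 2 = 2 := Real.sq_sqrt (by norm_num)
    have hu : Real.cos θ + Real.sin θ = Real.sqrt 2 * Real.sin (θ + Real.pi / 4) := by
      rw [Real.sin_add, Real.sin_pi_div_four, Real.cos_pi_div_four]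
      linear_combination -(Real.sin θ + Real.cos θ) / 2 * h2
    have huv : Real.cos θ + Real.sin θ = Real.sqrt 6 / 3 := by
      rw [hu, hs]
      have h23 : Real.sqrt 2 * Real.sqrt 3 = Real.sqrt 6 := by
        rw [← Real.sqrt_mul (by norm_num : (0:ℝ) ≤ 2)]; norm_num
      linear_combination h23 / 3
    simp only
    rw [huv]
    have hsq : (Real.sqrt 6 / 3) ^ 2 = 2/3 := by nlinarith [h6]
    rw [hsq, abs_of_nonneg (by nlinarith [h6pos])]
    ring
  · rintro x ⟨θ, rfl⟩
    simp only
    have husq : (Real.cos θ + Real.sin θ) ^ 2 ≤ 2 := by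
      nlinarith [Real.sin_sq_add_cos_sq θ, sq_nonneg (Real.sin θ - Real.cos θ)]
    have hcpos : (0:ℝ) ≤ 64 * Real.sqrt 6 / 9 := by positivity
    have hsq : ((-8) * (Real.cos θ + Real.sin θ) * (-4 + 2 * (Real.cos θ + Real.sin θ) ^ 2)) ^ 2
        ≤ (64 * Real.sqrt 6 / 9) ^ 2 := by
      nlinarith [mul_nonneg (sq_nonneg ((Real.cos θ + Real.sin θ) ^ 2 - 2/3))
        (by linarith : (0:ℝ) ≤ 8/3 - (Real.cos θ + Real.sin θ) ^ 2), h6]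
    calc |(-8) * (Real.cos θ + Real.sin θ) * (-4 + 2 * (Real.cos θ + Real.sin θ) ^ 2)|
        = Real.sqrt (((-8) * (Real.cos θ + Real.sin θ) * (-4 + 2 * (Real.cos θ + Real.sin θ) ^ 2)) ^ 2) := (Real.sqrt_sq_eq_abs _).symm
      _ ≤ Real.sqrt ((64 * Real.sqrt 6 / 9) ^ 2) := Real.sqrt_le_sqrt hsq
      _ = 64 * Real.sqrt 6 / 9 := by rw [Real.sqrt_sq hcpos]
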